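/- Let G be a group and f : P_fin(G) → ℝ a G-invariant submodular function (f(gA) = f(A) for all g ∈ G, finite A ⊆ G) attaining a minimum m on nonempty finite subsets. Then there exists a unique atom H of f containing the identity 1, H is a finite subgroup of G, and every atom of f is a left coset gH; consequently the atoms partition G. -/
import Mathlib


open Pointwise

/-- An atom for `f` with minimum value `m`: a nonempty finite set achieving `m`,
of minimal cardinality among such sets. -/
def IsAtomFor {S : Type*} (f : Finset S → ℝ) (m : ℝ) (A : Finset S) : Prop :=
  A.Nonempty ∧ f A = m ∧ ∀ B : Finset S, B.Nonempty → f B = m → A.card ≤ B.card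

/-- For a `G`-invariant submodular function on finite subsets of `G` attaining its
minimum `m`, there is a unique atom `H` containing `1`; it is a (finite) subgroup of `G`
and every atom is a left coset `gH`. -/
theorem stmt_8 {G : Type*} [Group G] [DecidableEq G]
    (f : Finset G → ℝ) (m : ℝ)
    (hsub : ∀ A B : Finset G, f (A ∩ B) + f (A ∪ B) ≤ f A + f B)
    (hinv : ∀ (g : G) (A : Finset G), f (g • A) = f A)
    (hmin : ∀ A : Finset G, A.Nonempty → m ≤ f A)
    (hatt : ∃ A : Finset G, A.Nonempty ∧ f A = m) :
    ∃ H : Finset G, (1 : G) ∈ H ∧ IsAtomFor f m H ∧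
      (∀ H' : Finset G, (1 : G) ∈ H' → IsAtomFor f m H' → H' = H) ∧
      (∃ S : Subgroup G, (S : Set G) = (H : Set G)) ∧
      (∀ A : Finset G, IsAtomFor f m A → ∃ g : G, A = g • H) ∧
      (∀ g : G, IsAtomFor f m (g • H)) := by
  classical
  -- Two atoms that intersect are equal.
  have key : ∀ A B : Finset G, IsAtomFor f m A → IsAtomFor f m B →
      (A ∩ B).Nonempty → A = B := by
    intro A B hA hB hAB
    have hUn : (A ∪ B).Nonempty := hA.1.mono Finset.subset_union_left
    have h1 : m ≤ f (A ∩ B) := hmin _ hAB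
    have h2 : m ≤ f (A ∪ B) := hmin _ hUn
    have h3 := hsub A B
    have hfi : f (A ∩ B) = m := by
      have := hA.2.1; have := hB.2.1; linarith
    have hcA : A.card ≤ (A ∩ B).card := hA.2.2 _ hAB hfi
    have hcB : B.card ≤ (A ∩ B).card := hB.2.2 _ hAB hfi
    have eA : A ∩ B = A := Finset.eq_of_subset_of_card_le Finset.inter_subset_left hcA
    have eB : A ∩ B = B := Finset.eq_of_subset_of_card_le Finset.inter_subset_right hcB
    exact eA.symm.trans eB
  -- Translates of atoms are atoms.
  have smul_atom : ∀ (g : G) (A : Finset G), IsAtomFor f m A → IsAtomFor f m (g • A) := by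
    intro g A hA
    refine ⟨hA.1.smul_finset, by rw [hinv]; exact hA.2.1, ?_⟩
    intro B hB hfB
    rw [Finset.card_smul_finset]
    exact hA.2.2 B hB hfB
  -- An atom exists.
  have hex : ∃ A : Finset G, IsAtomFor f m A := by
    obtain ⟨A0, hA0n, hA0f⟩ := hatt
    have hP : ∃ n, ∃ A : Finset G, A.Nonempty ∧ f A = m ∧ A.card = n :=
      ⟨A0.card, A0, hA0n, hA0f, rfl⟩
    obtain ⟨A, hAn, hAf, hAc⟩ := Nat.find_spec hP
    refine ⟨A, hAn, hAf, ?_⟩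
    intro B hBn hBf
    rw [hAc]
    exact Nat.find_min' hP ⟨B, hBn, hBf, rfl⟩
  obtain ⟨A, hA⟩ := hex
  obtain ⟨a, ha⟩ := hA.1
  set H : Finset G := a⁻¹ • A with hHdef
  have hH : IsAtomFor f m H := smul_atom _ _ hA
  have h1H : (1 : G) ∈ H := by
    have := Finset.smul_mem_smul_finset (a := a⁻¹) ha
    simpa using this
  have hcoset : ∀ h ∈ H, h • H = H := by
    intro h hh
    refine key _ _ (smul_atom h H hH) hH ⟨h, Finset.mem_inter.2 ⟨?_, hh⟩⟩
    have := Finset.smul_mem_smul_finset (a := h) h1H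
    simpa using this
  have hmul : ∀ x ∈ H, ∀ y ∈ H, x * y ∈ H := by
    intro x hx y hy
    have : x • y ∈ x • H := Finset.smul_mem_smul_finset hy
    rw [hcoset x hx] at this
    simpa using this
  have hinvmem : ∀ x ∈ H, x⁻¹ ∈ H := by
    intro x hx
    have h1 : (1 : G) ∈ x • H := by rw [hcoset x hx]; exact h1H
    rw [Finset.mem_smul_finset] at h1
    obtain ⟨y, hy, hxy⟩ := h1
    have hy' : y = x⁻¹ := eq_inv_of_mul_eq_one_right (by simpa using hxy)
    rwa [hy'] at hy
  refine ⟨H, h1H, hH, ?_, ?_, ?_, fun g => smul_atom g H hH⟩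
  · intro H' h1H' hH'
    exact key _ _ hH' hH ⟨1, Finset.mem_inter.2 ⟨h1H', h1H⟩⟩
  · exact ⟨⟨⟨⟨(H : Set G), fun hx hy => hmul _ hx _ hy⟩, h1H⟩, fun hx => hinvmem _ hx⟩, rfl⟩
  · intro B hB
    obtain ⟨g, hg⟩ := hB.1
    refine ⟨g, key _ _ hB (smul_atom g H hH) ⟨g, Finset.mem_inter.2 ⟨hg, ?_⟩⟩⟩
    have := Finset.smul_mem_smul_finset (a := g) h1H
    simpa using this
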